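/- For every 1 ≤ k < l ≤ n the following polynomial identities hold in R_n: (i) if 1 ≤ i ≤ k and l+1 ≤ j ≤ n, then {x_{ij}, Δ_{l;k}}·Δ'_{l;l−k} − Δ_{l;k}·{x_{ij}, Δ'_{l;l−k}} = −x_{ij}·Δ_{l;k}·Δ'_{l;l−k}; (ii) if l+1 ≤ i ≤ n and 1 ≤ j ≤ l−k, then {x_{ij}, Δ_{l;k}}·Δ'_{l;l−k} − Δ_{l;k}·{x_{ij}, Δ'_{l;l−k}} = x_{ij}·Δ_{l;k}·Δ'_{l;l−k}. (Equivalently, {x_{ij}, Δ_{l;k}/Δ'_{l;l−k}} = ε·x_{ij}·Δ_{l;k}/Δ'_{l;l−k} with ε = −1 in case (i) and ε = 1 in case (ii).) -/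
import Mathlib


open MvPolynomial

/-- The quadratic Poisson bracket on the polynomial algebra of the matrix affine
Poisson space `M_{m,n}`. -/
noncomputable def pois {m n : ℕ} (f g : MvPolynomial (Fin m × Fin n) ℂ) :
    MvPolynomial (Fin m × Fin n) ℂ :=
  ∑ i : Fin m, ∑ k : Fin m, ∑ j : Fin n, ∑ l : Fin n,
    (((k : ℤ) - (i : ℤ)).sign + ((l : ℤ) - (j : ℤ)).sign) •
      (X (i, l) * X (k, j) * pderiv (i, j) f * pderiv (k, l) g)

/-- The minor `Δ_{I,J}` (equal to `0` by convention if `|I| ≠ |J|`). -/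
noncomputable def Delta {m n : ℕ} (I : Finset (Fin m)) (J : Finset (Fin n)) :
    MvPolynomial (Fin m × Fin n) ℂ :=
  if h : J.card = I.card then
    Matrix.det (Matrix.of fun a b : Fin I.card =>
      X ((I.orderIsoOfFin rfl a).1, (J.orderIsoOfFin h b).1))
  else 0

/-- The coordinate ring `R_n = ℂ[x_{ij}]` of `M_n`. -/
abbrev Rn (n : ℕ) := MvPolynomial (Fin n × Fin n) ℂ

/-- The field of rational functions `F_n = ℂ(M_n)`. -/
abbrev Fn (n : ℕ) := FractionRing (Rn n)

/-- The interval `[a,b]` (in 1-based indexing) inside `{1,…,n}`, as a finset of `Fin n`. -/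
def iv (n a b : ℕ) : Finset (Fin n) :=
  Finset.univ.filter fun i => a ≤ (i : ℕ) + 1 ∧ (i : ℕ) + 1 ≤ b

/-- `Δ_{l;k}`: the upper-right `k×k` minor of the principal `l×l` submatrix. -/
noncomputable def Dul (n l k : ℕ) : Rn n := Delta (iv n 1 k) (iv n (l - k + 1) l)

/-- `Δ'_{l;k}`: the lower-left `k×k` minor of the principal `l×l` submatrix. -/
noncomputable def Dll (n l k : ℕ) : Rn n := Delta (iv n (l - k + 1) l) (iv n 1 k)

/-- `Δ_l`: the principal `l×l` minor. -/
noncomputable def Dpr (n l : ℕ) : Rn n := Delta (iv n 1 l) (iv n 1 l)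

/-- The extension of the quadratic Poisson bracket to the field of rational functions,
determined by `{P/Q, S/T} = ({P,S}QT − {P,T}QS − {Q,S}PT + {Q,T}PS)/(Q²T²)`. -/
noncomputable def poisF (n : ℕ) (f g : Fn n) : Fn n :=
  let φ := algebraMap (Rn n) (Fn n)
  let P := (IsLocalization.sec (nonZeroDivisors (Rn n)) f).1
  let Q := ((IsLocalization.sec (nonZeroDivisors (Rn n)) f).2 : Rn n)
  let S := (IsLocalization.sec (nonZeroDivisors (Rn n)) g).1
  let T := ((IsLocalization.sec (nonZeroDivisors (Rn n)) g).2 : Rn n)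
  (φ (pois P S) * φ Q * φ T - φ (pois P T) * φ Q * φ S
    - φ (pois Q S) * φ P * φ T + φ (pois Q T) * φ P * φ S)
    / (φ Q ^ 2 * φ T ^ 2)

/-! ### Auxiliary lemmas -/

section DerivDet

variable {A : Type*} [CommRing A] [Algebra ℂ A]

lemma deriv_prod (D : Derivation ℂ A A) {ι : Type*} [DecidableEq ι] (s : Finset ι) (f : ι → A) :
    D (∏ i ∈ s, f i) = ∑ i ∈ s, (∏ j ∈ s.erase i, f j) * D (f i) := by
  induction s using Finset.induction_on with
  | empty => simp
  | @insert a s ha ih =>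
    rw [Finset.prod_insert ha, Derivation.leibniz, smul_eq_mul, smul_eq_mul, ih,
      Finset.mul_sum, Finset.sum_insert ha, Finset.erase_insert ha, add_comm]
    congr 1
    refine Finset.sum_congr rfl fun i hi => ?_
    rw [Finset.erase_insert_of_ne (by rintro rfl; exact ha hi),
      Finset.prod_insert (by simp [ha, Finset.mem_erase]), ← mul_assoc, mul_comm (f a), mul_assoc]

lemma deriv_det (D : Derivation ℂ A A) {c : ℕ} (M : Matrix (Fin c) (Fin c) A) :
    D M.det = ∑ a : Fin c, (M.updateRow a fun b => D (M a b)).det := by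
  classical
  have key : ∀ a : Fin c, (M.updateRow a fun b => D (M a b)).det
      = ∑ σ : Equiv.Perm (Fin c), Equiv.Perm.sign σ •
          (D (M (σ (σ⁻¹ a)) (σ⁻¹ a)) * ∏ b ∈ Finset.univ.erase (σ⁻¹ a), M (σ b) b) := by
    intro a
    rw [Matrix.det_apply]
    refine Finset.sum_congr rfl fun σ _ => ?_
    congr 1
    rw [← Finset.prod_erase_mul _ _ (Finset.mem_univ (σ⁻¹ a)), mul_comm]
    congr 1
    · rw [Matrix.updateRow_apply, if_pos (by simp)]
      simp
    · refine Finset.prod_congr rfl fun b hb => ?_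
      rw [Matrix.updateRow_apply, if_neg]
      intro h
      exact (Finset.mem_erase.mp hb).1 (by rw [← h]; simp)
  rw [Matrix.det_apply, map_sum]
  simp_rw [key]
  rw [Finset.sum_comm]
  refine Finset.sum_congr rfl fun σ _ => ?_
  have hD : D (Equiv.Perm.sign σ • ∏ i, M (σ i) i)
      = Equiv.Perm.sign σ • D (∏ i, M (σ i) i) := by
    rw [Units.smul_def, Units.smul_def, map_zsmul]
  rw [hD, deriv_prod, Finset.smul_sum]
  refine Fintype.sum_equiv σ _ _ fun x => ?_
  simp [mul_comm]

lemma deriv_det_col (D : Derivation ℂ A A) {c : ℕ} (M : Matrix (Fin c) (Fin c) A) :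
    D M.det = ∑ b : Fin c, (M.updateCol b fun a => D (M a b)).det := by
  rw [← Matrix.det_transpose M, deriv_det]
  refine Finset.sum_congr rfl fun b _ => ?_
  rw [← Matrix.det_transpose (M.updateCol b fun a => D (M a b))]
  congr 1
  rw [Matrix.updateRow_transpose]
  rfl

lemma derivation_sum_apply {ι : Type*} (s : Finset ι) (F : ι → Derivation ℂ A A) (g : A) :
    (∑ k ∈ s, F k) g = ∑ k ∈ s, F k g := by
  induction s using Finset.cons_induction with
  | empty => simp
  | cons a s ha ih =>
    rw [Finset.sum_cons, Finset.sum_cons, ← ih]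
    rfl

end DerivDet

/-- The derivation `{x_{ij}, -}`. -/
noncomputable def Dp (n : ℕ) (i j : Fin n) : Derivation ℂ (Rn n) (Rn n) :=
  ∑ k : Fin n, ∑ l : Fin n,
    ((((k : ℤ) - (i : ℤ)).sign + ((l : ℤ) - (j : ℤ)).sign) • (X (i, l) * X (k, j) : Rn n)) •
      pderiv (k, l)

lemma Dp_apply (n : ℕ) (i j : Fin n) (g : Rn n) :
    Dp n i j g = ∑ k : Fin n, ∑ l : Fin n,
      ((((k : ℤ) - (i : ℤ)).sign + ((l : ℤ) - (j : ℤ)).sign) • (X (i, l) * X (k, j) : Rn n)) *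
        pderiv (k, l) g := by
  rw [Dp, derivation_sum_apply]
  refine Finset.sum_congr rfl fun k _ => ?_
  rw [derivation_sum_apply]
  refine Finset.sum_congr rfl fun l _ => ?_
  rw [Derivation.smul_apply, smul_eq_mul]

lemma pderiv_X_pair {n : ℕ} (p q : Fin n × Fin n) :
    pderiv p (X q : Rn n) = if p = q then 1 else 0 := by
  split
  · rename_i h; subst h; exact pderiv_X_self p
  · rename_i h; exact pderiv_X_of_ne (Ne.symm h)

lemma Dp_X (n : ℕ) (i j k l : Fin n) :
    Dp n i j (X (k, l)) =
      (((k : ℤ) - (i : ℤ)).sign + ((l : ℤ) - (j : ℤ)).sign) • (X (i, l) * X (k, j) : Rn n) := by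
  rw [Dp_apply]
  rw [Finset.sum_eq_single k]
  · rw [Finset.sum_eq_single l]
    · rw [pderiv_X_pair, if_pos rfl, mul_one]
    · intro b _ hb
      rw [pderiv_X_pair, if_neg (by simp [hb]), mul_zero]
    · simp
  · intro a _ ha
    refine Finset.sum_eq_zero fun b _ => ?_
    rw [pderiv_X_pair, if_neg (by simp [ha]), mul_zero]
  · simp

lemma pois_X_eq_Dp (n : ℕ) (i j : Fin n) (g : Rn n) :
    pois (X (i, j)) g = Dp n i j g := by
  rw [pois, Dp_apply]
  rw [Finset.sum_eq_single i]
  · refine Finset.sum_congr rfl fun k _ => ?_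
    rw [Finset.sum_eq_single j]
    · refine Finset.sum_congr rfl fun l _ => ?_
      rw [pderiv_X_pair, if_pos rfl, mul_one, smul_mul_assoc]
    · intro b _ hb
      refine Finset.sum_eq_zero fun l _ => ?_
      rw [pderiv_X_pair, if_neg (by simp [hb]), mul_zero, zero_mul, smul_zero]
    · simp
  · intro a _ ha
    refine Finset.sum_eq_zero fun k _ => Finset.sum_eq_zero fun b _ =>
      Finset.sum_eq_zero fun l _ => ?_
    rw [pderiv_X_pair, if_neg (by simp [ha]), mul_zero, zero_mul, smul_zero]
  · simp

lemma mem_iv {n a b : ℕ} {i : Fin n} : i ∈ iv n a b ↔ a ≤ (i : ℕ) + 1 ∧ (i : ℕ) + 1 ≤ b := by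
  simp [iv]

lemma iv_card {n a b : ℕ} (ha : 1 ≤ a) (hb : b ≤ n) : (iv n a b).card = b + 1 - a := by
  have h : ∀ m ∈ Finset.Ico (a - 1) b, m < n := fun m hm =>
    lt_of_lt_of_le (Finset.mem_Ico.mp hm).2 hb
  have he : iv n a b = (Finset.Ico (a - 1) b).attachFin h := by
    ext i
    rw [mem_iv, Finset.mem_attachFin, Finset.mem_Ico]
    omega
  rw [he, Finset.card_attachFin, Nat.card_Ico]
  omega

/-- If `x_{ij}` "commutes" in signs with every entry position of the minor, the bracket
vanishes. -/
lemma Dp_Delta_zero (n : ℕ) (i j : Fin n) (I J : Finset (Fin n))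
    (h : ∀ a ∈ I, ∀ b ∈ J,
      (((a : ℕ) : ℤ) - (i : ℕ)).sign + (((b : ℕ) : ℤ) - (j : ℕ)).sign = 0) :
    pois (X (i, j)) (Delta I J) = 0 := by
  rw [pois_X_eq_Dp, Delta]
  split
  · rename_i hc
    rw [deriv_det]
    refine Finset.sum_eq_zero fun a _ => ?_
    apply Matrix.det_eq_zero_of_row_eq_zero a
    intro b
    rw [Matrix.updateRow_self, Matrix.of_apply, Dp_X,
      h _ (I.orderIsoOfFin rfl a).2 _ (J.orderIsoOfFin hc b).2, zero_smul]
  · exact map_zero _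

/-- Row eigenvector case: `i ∈ I` and `j` lies strictly to the right of all columns of `J`. -/
lemma Dp_Delta_row (n : ℕ) (i j : Fin n) (I J : Finset (Fin n)) (hc : J.card = I.card)
    (hi : i ∈ I) (hJ : ∀ b ∈ J, (((b : ℕ) : ℤ) - (j : ℕ)).sign = -1) :
    pois (X (i, j)) (Delta I J) = -(X (i, j) * Delta I J) := by
  rw [pois_X_eq_Dp, Delta, dif_pos hc, deriv_det]
  set M : Matrix (Fin I.card) (Fin I.card) (Rn n) :=
    Matrix.of fun a b => X ((I.orderIsoOfFin rfl a).1, (J.orderIsoOfFin hc b).1) with hMdef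
  set a₀ : Fin I.card := (I.orderIsoOfFin rfl).symm ⟨i, hi⟩ with ha₀
  have hra₀ : ((I.orderIsoOfFin rfl) a₀ : Fin n) = i := by
    rw [ha₀, OrderIso.apply_symm_apply]
  have hrow : ∀ a : Fin I.card, (fun b => Dp n i j (M a b))
      = (((((I.orderIsoOfFin rfl a : Fin n) : ℕ) : ℤ) - (i : ℕ)).sign - 1) •
        (X ((I.orderIsoOfFin rfl a).1, j) : Rn n) • M a₀ := by
    intro a
    funext b
    have h1 : M a b = X ((I.orderIsoOfFin rfl a).1, (J.orderIsoOfFin hc b).1) := rfl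
    have h2 : M a₀ b = X (i, (J.orderIsoOfFin hc b).1) := by
      show X ((I.orderIsoOfFin rfl a₀).1, (J.orderIsoOfFin hc b).1)
        = X (i, (J.orderIsoOfFin hc b).1)
      rw [hra₀]
    rw [h1, Dp_X, hJ _ (J.orderIsoOfFin hc b).2]
    simp only [Pi.smul_apply, h2, smul_eq_mul, smul_mul_assoc]
    rw [mul_comm]
    congr 1
  have hdet : ∀ a : Fin I.card, (M.updateRow a fun b => Dp n i j (M a b)).det
      = ((((((I.orderIsoOfFin rfl a : Fin n) : ℕ) : ℤ) - (i : ℕ)).sign - 1) •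
          (X ((I.orderIsoOfFin rfl a).1, j) : Rn n)) * (M.updateRow a (M a₀)).det := by
    intro a
    rw [hrow a, ← smul_assoc, Matrix.det_updateRow_smul]
  rw [Finset.sum_congr rfl fun a _ => hdet a, Finset.sum_eq_single a₀]
  · rw [Matrix.updateRow_eq_self]
    have hs : ((((I.orderIsoOfFin rfl a₀ : Fin n) : ℕ) : ℤ) - (i : ℕ)).sign - 1 = -1 := by
      rw [hra₀]
      simp
    rw [hs]
    have hx : (X ((I.orderIsoOfFin rfl a₀).1, j) : Rn n) = X (i, j) := by rw [hra₀]
    rw [hx]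
    simp [neg_mul]
  · intro a _ ha
    rw [Matrix.det_updateRow_eq_zero (Ne.symm ha), mul_zero]
  · simp

/-- Column eigenvector case: `j ∈ J` and `i` lies strictly below all rows of `I`. -/
lemma Dp_Delta_col (n : ℕ) (i j : Fin n) (I J : Finset (Fin n)) (hc : J.card = I.card)
    (hj : j ∈ J) (hI : ∀ a ∈ I, (((a : ℕ) : ℤ) - (i : ℕ)).sign = -1) :
    pois (X (i, j)) (Delta I J) = -(X (i, j) * Delta I J) := by
  rw [pois_X_eq_Dp, Delta, dif_pos hc, deriv_det_col]
  set M : Matrix (Fin I.card) (Fin I.card) (Rn n) :=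
    Matrix.of fun a b => X ((I.orderIsoOfFin rfl a).1, (J.orderIsoOfFin hc b).1) with hMdef
  set b₀ : Fin I.card := (J.orderIsoOfFin hc).symm ⟨j, hj⟩ with hb₀
  have hcb₀ : ((J.orderIsoOfFin hc) b₀ : Fin n) = j := by
    rw [hb₀, OrderIso.apply_symm_apply]
  have hcol : ∀ b : Fin I.card, (fun a => Dp n i j (M a b))
      = (((((J.orderIsoOfFin hc b : Fin n) : ℕ) : ℤ) - (j : ℕ)).sign - 1) •
        (X (i, (J.orderIsoOfFin hc b).1) : Rn n) • fun a => M a b₀ := by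
    intro b
    funext a
    have h1 : M a b = X ((I.orderIsoOfFin rfl a).1, (J.orderIsoOfFin hc b).1) := rfl
    have h2 : M a b₀ = X ((I.orderIsoOfFin rfl a).1, j) := by
      show X ((I.orderIsoOfFin rfl a).1, (J.orderIsoOfFin hc b₀).1)
        = X ((I.orderIsoOfFin rfl a).1, j)
      rw [hcb₀]
    rw [h1, Dp_X, hI _ (I.orderIsoOfFin rfl a).2]
    simp only [Pi.smul_apply, h2, smul_eq_mul, smul_mul_assoc]
    rw [add_comm]
    congr 1
  have hdet : ∀ b : Fin I.card, (M.updateCol b fun a => Dp n i j (M a b)).det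
      = ((((((J.orderIsoOfFin hc b : Fin n) : ℕ) : ℤ) - (j : ℕ)).sign - 1) •
          (X (i, (J.orderIsoOfFin hc b).1) : Rn n)) * (M.updateCol b fun a => M a b₀).det := by
    intro b
    rw [hcol b, ← smul_assoc, Matrix.det_updateCol_smul]
  rw [Finset.sum_congr rfl fun b _ => hdet b, Finset.sum_eq_single b₀]
  · rw [Matrix.updateCol_eq_self]
    have hs : ((((J.orderIsoOfFin hc b₀ : Fin n) : ℕ) : ℤ) - (j : ℕ)).sign - 1 = -1 := by
      rw [hcb₀]
      simp
    rw [hs]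
    have hx : (X (i, (J.orderIsoOfFin hc b₀).1) : Rn n) = X (i, j) := by rw [hcb₀]
    rw [hx]
    simp [neg_mul]
  · intro b _ hb
    rw [Matrix.det_updateCol_eq_zero (Ne.symm hb), mul_zero]
  · simp

/-- **Case 2 of the Gelfand–Zeitlin flow computation:**
`{x_{ij}, Δ_{l;k}/Δ'_{l;l−k}} = ε·x_{ij}·Δ_{l;k}/Δ'_{l;l−k}` with `ε = −1` when
`1 ≤ i ≤ k`, `l+1 ≤ j ≤ n`, and `ε = 1` when `l+1 ≤ i ≤ n`, `1 ≤ j ≤ l−k`,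
stated as polynomial identities in `Rₙ`. -/
theorem GZ_bracket_exponential_cases (n k l : ℕ) (hk : 1 ≤ k) (hkl : k < l) (hln : l ≤ n)
    (i j : Fin n) :
    ((i : ℕ) + 1 ≤ k → l + 1 ≤ (j : ℕ) + 1 →
      pois (X (i, j)) (Dul n l k) * Dll n l (l - k)
          - Dul n l k * pois (X (i, j)) (Dll n l (l - k))
        = -(X (i, j) * Dul n l k * Dll n l (l - k))) ∧
    (l + 1 ≤ (i : ℕ) + 1 → (j : ℕ) + 1 ≤ l - k →
      pois (X (i, j)) (Dul n l k) * Dll n l (l - k)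
          - Dul n l k * pois (X (i, j)) (Dll n l (l - k))
        = X (i, j) * Dul n l k * Dll n l (l - k)) := by
  constructor
  · intro hik hlj
    have h1 : pois (X (i, j)) (Dul n l k) = -(X (i, j) * Dul n l k) := by
      rw [Dul]
      apply Dp_Delta_row
      · rw [iv_card (by omega) hln, iv_card (by omega) (by omega)]
        omega
      · rw [mem_iv]
        omega
      · intro b hb
        rw [mem_iv] at hb
        exact Int.sign_eq_neg_one_of_neg (by omega)
    have h2 : pois (X (i, j)) (Dll n l (l - k)) = 0 := by
      rw [Dll]
      apply Dp_Delta_zero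
      intro a ha b hb
      rw [mem_iv] at ha hb
      rw [Int.sign_eq_one_of_pos (a := ((a : ℕ) : ℤ) - ((i : ℕ) : ℤ)) (by omega),
        Int.sign_eq_neg_one_of_neg (a := ((b : ℕ) : ℤ) - ((j : ℕ) : ℤ)) (by omega)]
      ring
    rw [h1, h2]
    ring
  · intro hli hjlk
    have h1 : pois (X (i, j)) (Dul n l k) = 0 := by
      rw [Dul]
      apply Dp_Delta_zero
      intro a ha b hb
      rw [mem_iv] at ha hb
      rw [Int.sign_eq_neg_one_of_neg (a := ((a : ℕ) : ℤ) - ((i : ℕ) : ℤ)) (by omega),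
        Int.sign_eq_one_of_pos (a := ((b : ℕ) : ℤ) - ((j : ℕ) : ℤ)) (by omega)]
      ring
    have h2 : pois (X (i, j)) (Dll n l (l - k)) = -(X (i, j) * Dll n l (l - k)) := by
      rw [Dll]
      apply Dp_Delta_col
      · rw [iv_card (by omega) (by omega), iv_card (by omega) hln]
        omega
      · rw [mem_iv]
        omega
      · intro a ha
        rw [mem_iv] at ha
        exact Int.sign_eq_neg_one_of_neg (by omega)
    rw [h1, h2]
    ring
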